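/- arXiv:math/9502208 — 3 statements merged into one kernel-verified Lean document; each statement's English description precedes it below -/
import Mathlib

section
/- The Lie algebra g₇ is strictly nonsingular, and its center equals span{W}. -/
noncomputable section

/-- The bracket of the Lie algebra g₇ on ℝ⁷ with basis X₁,X₂,Y₁,Y₂,Z₁,Z₂,W
at coordinates 0,…,6. -/
def br7 (u v : Fin 7 → ℝ) : Fin 7 → ℝ :=
  ![0, 0, 0, 0,
    u 0 * v 2 - u 2 * v 0 + (u 1 * v 3 - u 3 * v 1),
    u 0 * v 3 - u 3 * v 0,
    u 0 * v 4 - u 4 * v 0 + (u 1 * v 5 - u 5 * v 1) + (u 2 * v 3 - u 3 * v 2)]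

def Wv : Fin 7 → ℝ := Pi.single 6 1


@[local simp] lemma cv4' (a b c d e f g : ℝ) : ![a,b,c,d,e,f,g] (4:Fin 7) = e := rfl
@[local simp] lemma cv5' (a b c d e f g : ℝ) : ![a,b,c,d,e,f,g] (5:Fin 7) = f := rfl
@[local simp] lemma cv6' (a b c d e f g : ℝ) : ![a,b,c,d,e,f,g] (6:Fin 7) = g := rfl

lemma center_char (u : Fin 7 → ℝ) :
    (∀ v, br7 u v = 0) ↔
      u 0 = 0 ∧ u 1 = 0 ∧ u 2 = 0 ∧ u 3 = 0 ∧ u 4 = 0 ∧ u 5 = 0 := by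
  constructor
  · intro h
    have h0 := congrFun (h ![0,0,0,1,0,0,0]) 5
    have h1 := congrFun (h ![0,0,0,1,0,0,0]) 4
    have h2 := congrFun (h ![0,0,0,1,0,0,0]) 6
    have h3 := congrFun (h ![1,0,0,0,0,0,0]) 5
    have h4 := congrFun (h ![1,0,0,0,0,0,0]) 6
    have h5 := congrFun (h ![0,1,0,0,0,0,0]) 6
    simp [br7] at h0 h1 h2 h3 h4 h5
    refine ⟨h0, ?_, h2, h3, ?_, ?_⟩ <;> linarith
  · rintro ⟨h0, h1, h2, h3, h4, h5⟩ v
    funext i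
    fin_cases i <;> simp [br7, h0, h1, h2, h3, h4, h5]

/-- g₇ is strictly nonsingular: for every noncentral X and every central Z there is Y
with [X,Y] = Z; moreover the center of g₇ equals span{W}. -/
theorem stmt1 :
    (∀ X : Fin 7 → ℝ, (¬ ∀ v, br7 X v = 0) →
      ∀ Z : Fin 7 → ℝ, (∀ v, br7 Z v = 0) → ∃ Y, br7 X Y = Z) ∧
    {u : Fin 7 → ℝ | ∀ v, br7 u v = 0} =
      (Submodule.span ℝ {Wv} : Submodule ℝ (Fin 7 → ℝ)) := by
  constructor
  · intro X hX Z hZ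
    rw [center_char] at hZ
    obtain ⟨z0, z1, z2, z3, z4, z5⟩ := hZ
    rw [center_char] at hX
    push_neg at hX
    by_cases x0 : X 0 = 0
    · by_cases x1 : X 1 = 0
      · by_cases x2 : X 2 = 0
        · by_cases x3 : X 3 = 0
          · by_cases x4 : X 4 = 0
            · have x5 : X 5 ≠ 0 := hX x0 x1 x2 x3 x4
              refine ⟨![0, -(Z 6 / X 5), 0, 0, 0, 0, 0], ?_⟩
              funext i
              fin_cases i <;>
                simp [br7, x0, x1, x2, x3, x4, z0, z1, z2, z3, z4, z5] <;>
                field_simp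
            · refine ⟨![-(Z 6 / X 4), 0, 0, 0, 0, 0, 0], ?_⟩
              funext i
              fin_cases i <;>
                simp [br7, x0, x1, x2, x3, z0, z1, z2, z3, z4, z5] <;>
                field_simp
          · refine ⟨![0, 0, -(Z 6 / X 3), 0, 0, 0, 0], ?_⟩
            funext i
            fin_cases i <;>
              simp [br7, x0, x1, x2, z0, z1, z2, z3, z4, z5] <;>
              field_simp
        · refine ⟨![0, 0, 0, Z 6 / X 2, 0, 0, 0], ?_⟩
          funext i
          fin_cases i <;>
            simp [br7, x0, x1, z0, z1, z2, z3, z4, z5] <;>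
            field_simp
      · refine ⟨![0, 0, 0, 0, 0, Z 6 / X 1, 0], ?_⟩
        funext i
        fin_cases i <;>
          simp [br7, x0, z0, z1, z2, z3, z4, z5] <;>
          field_simp
    · refine ⟨![0, 0, 0, 0, Z 6 / X 0, 0, 0], ?_⟩
      funext i
      fin_cases i <;>
        simp [br7, z0, z1, z2, z3, z4, z5] <;>
        field_simp
  · ext u
    simp only [Set.mem_setOf_eq, SetLike.mem_coe, Submodule.mem_span_singleton,
      center_char]
    constructor
    · rintro ⟨h0, h1, h2, h3, h4, h5⟩
      refine ⟨u 6, ?_⟩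
      funext i
      fin_cases i <;> simp [Wv, h0, h1, h2, h3, h4, h5, Pi.single]
    · rintro ⟨c, rfl⟩
      simp [Wv, Pi.single]
end
end

section
/- Let g be a finite-dimensional real Lie algebra that is strictly nonsingular, let z be its center, and let τ : g → ℝ be a linear functional whose restriction to z is not identically zero. Then the skew-symmetric bilinear form b_τ on the quotient vector space g/z defined by b_τ(X̄, Ȳ) = τ([X,Y]) (where X, Y are any representatives of X̄, Ȳ) is well defined and nondegenerate. -/
/-- Let g be a finite-dimensional real Lie algebra which is strictly nonsingular
(for every noncentral X and central Z there is Y with [X,Y] = Z), and let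
τ : g → ℝ be a linear functional whose restriction to the center z is not
identically zero.  Then the skew-symmetric bilinear form b_τ(X̄,Ȳ) = τ([X,Y]) on
g/z is well defined (independent of representatives) and nondegenerate. -/
theorem stmt4 (L : Type*) [LieRing L] [LieAlgebra ℝ L] [FiniteDimensional ℝ L]
    (hSN : ∀ X : L, X ∉ LieAlgebra.center ℝ L →
      ∀ Z ∈ LieAlgebra.center ℝ L, ∃ Y : L, ⁅X, Y⁆ = Z)
    (τ : L →ₗ[ℝ] ℝ) (hτ : ∃ Z ∈ LieAlgebra.center ℝ L, τ Z ≠ 0) :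
    (∀ x x' y y' : L, x - x' ∈ LieAlgebra.center ℝ L → y - y' ∈ LieAlgebra.center ℝ L →
      τ ⁅x, y⁆ = τ ⁅x', y'⁆) ∧
    (∀ x y : L, τ ⁅x, y⁆ = - τ ⁅y, x⁆) ∧
    (∀ x : L, (∀ y : L, τ ⁅x, y⁆ = 0) → x ∈ LieAlgebra.center ℝ L) := by
  refine ⟨?_, ?_, ?_⟩
  · intro x x' y y' hx hy
    rw [LieModule.mem_maxTrivSubmodule] at hx hy
    have h1 : ⁅x, y⁆ = ⁅x', y'⁆ := by
      have e1 : ⁅x - x', y⁆ = 0 := by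
        have := hx y; rwa [← lie_skew, neg_eq_zero] at this
      have e2 : ⁅x', y - y'⁆ = 0 := hy x'
      rw [sub_lie] at e1
      rw [lie_sub] at e2
      rw [sub_eq_zero.mp e1, sub_eq_zero.mp e2]
    rw [h1]
  · intro x y
    rw [← lie_skew, map_neg]
  · intro x hx
    by_contra hxc
    obtain ⟨Z, hZ, hZτ⟩ := hτ
    obtain ⟨Y, hY⟩ := hSN x hxc Z hZ
    exact hZτ (hY ▸ hx Y)
end

section
/- The linear map Φ : ḡ₆ → ḡ₆ determined by Φ(X̄₁) = X̄₁, Φ(X̄₂) = X̄₂, Φ(Ȳ₁) = Ȳ₁, Φ(Ȳ₂) = Ȳ₂ + (1/2)Z̄₂, Φ(Z̄₁) = Z̄₁, Φ(Z̄₂) = Z̄₂ is a Lie algebra automorphism of ḡ₆, and it is almost inner: for every X ∈ ḡ₆ there exists A ∈ ḡ₆ with Φ(X) = X + [A, X]. -/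
noncomputable section

/-- The bracket of the Lie algebra ḡ₆ on ℝ⁶ with basis X̄₁,X̄₂,Ȳ₁,Ȳ₂,Z̄₁,Z̄₂
at coordinates 0,…,5, determined by [X̄₁,Ȳ₁] = [X̄₂,Ȳ₂] = Z̄₁, [X̄₁,Ȳ₂] = Z̄₂,
all other basis brackets zero. -/
def br6 (u v : Fin 6 → ℝ) : Fin 6 → ℝ :=
  ![0, 0, 0, 0,
    u 0 * v 2 - u 2 * v 0 + (u 1 * v 3 - u 3 * v 1),
    u 0 * v 3 - u 3 * v 0]

def X1 : Fin 6 → ℝ := Pi.single 0 1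
def X2 : Fin 6 → ℝ := Pi.single 1 1
def Y1 : Fin 6 → ℝ := Pi.single 2 1
def Y2 : Fin 6 → ℝ := Pi.single 3 1
def Z1 : Fin 6 → ℝ := Pi.single 4 1
def Z2 : Fin 6 → ℝ := Pi.single 5 1

/-- The linear map with Φ(X̄₁)=X̄₁, Φ(X̄₂)=X̄₂, Φ(Ȳ₁)=Ȳ₁, Φ(Ȳ₂)=Ȳ₂+(1/2)Z̄₂,
Φ(Z̄₁)=Z̄₁, Φ(Z̄₂)=Z̄₂. -/
def Phi (u : Fin 6 → ℝ) : Fin 6 → ℝ :=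
  u 0 • X1 + u 1 • X2 + u 2 • Y1 + u 3 • (Y2 + (1/2 : ℝ) • Z2) + u 4 • Z1 + u 5 • Z2

lemma vec6_five (a b c d e f : ℝ) : ![a,b,c,d,e,f] 5 = f := rfl

lemma Phi_eq (u : Fin 6 → ℝ) :
    Phi u = ![u 0, u 1, u 2, u 3, u 4, u 5 + u 3 / 2] := by
  funext i
  fin_cases i <;>
    simp [Phi, X1, X2, Y1, Y2, Z1, Z2, Pi.single_apply, vec6_five] <;> ring

/-- Φ is a Lie algebra automorphism of ḡ₆ and is almost inner. -/
theorem stmt6 :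
    IsLinearMap ℝ Phi ∧ Function.Bijective Phi ∧
    (∀ u v, Phi (br6 u v) = br6 (Phi u) (Phi v)) ∧
    (∀ X, ∃ A, Phi X = X + br6 A X) := by
  refine ⟨⟨?_, ?_⟩, ?_, ?_, ?_⟩
  · intro u v
    simp only [Phi_eq]
    funext i
    fin_cases i <;> simp [vec6_five, Matrix.cons_val_succ] <;> ring
  · intro c u
    simp only [Phi_eq]
    funext i
    fin_cases i <;> simp [vec6_five, Matrix.cons_val_succ] <;> ring
  · have : Function.LeftInverse (fun u => ![u 0, u 1, u 2, u 3, u 4, u 5 - u 3 / 2]) Phi ∧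
        Function.RightInverse (fun u => ![u 0, u 1, u 2, u 3, u 4, u 5 - u 3 / 2]) Phi := by
      constructor <;> intro u <;> simp only [Phi_eq] <;> funext i <;>
        fin_cases i <;> simp [vec6_five, Matrix.cons_val_succ] <;> ring
    exact Function.bijective_iff_has_inverse.mpr ⟨_, this⟩
  · intro u v
    simp only [Phi_eq, br6]
    funext i
    fin_cases i <;> simp [vec6_five, Matrix.cons_val_succ] <;> ring
  · intro X
    by_cases h : X 3 = 0
    · refine ⟨0, ?_⟩
      simp only [Phi_eq, br6]
      funext i
      fin_cases i <;> simp [vec6_five, Matrix.cons_val_succ, h]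
    · refine ⟨![1/2, -X 2 / (2 * X 3), 0, 0, 0, 0], ?_⟩
      simp only [Phi_eq, br6]
      funext i
      fin_cases i <;> simp [vec6_five, Matrix.cons_val_succ] <;> field_simp <;> ring
end
end
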